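/- arXiv:1306.6031 — 2 statements merged into one kernel-verified Lean document; each statement's English description precedes it below -/
import Mathlib

section
/- Let $d \geq 2$, let $\nu = (p_1/q, \ldots, p_d/q)^T$ with positive integers $p_i < q$ and $\gcd(p_1,\ldots,p_d,q)=1$, and let $L_\nu = \mathbb{Z}^d + \mathbb{Z}\nu$ with covering radius $\tau = \tau(L_\nu)$. If $\tau < 1/2$, then there exists an integer $t$ with $1 \leq t \leq q-1$ such that the point $\xi = t\nu \bmod 1$ lies in the ball $B^d(c(\tau), \tau)$, where $c(\tau) = (\tau, \ldots, \tau, 1 - \tau)$; in particular $r(\xi) \leq r(d, \tau)$. -/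
/-- The set `L_ν = ℤ^d + ℤν`. -/
def latticeNu (d : ℕ) (ν : EuclideanSpace ℝ (Fin d)) : Set (EuclideanSpace ℝ (Fin d)) :=
  {x | ∃ (z : Fin d → ℤ) (t : ℤ), ∀ i, x i = (z i : ℝ) + (t : ℝ) * ν i}

/-- The covering radius of a subset `L ⊆ ℝ^d` (Euclidean norm). -/
noncomputable def covRad (d : ℕ) (L : Set (EuclideanSpace ℝ (Fin d))) : ℝ :=
  sInf {σ : ℝ | 0 < σ ∧ ∀ x : EuclideanSpace ℝ (Fin d), ∃ y ∈ L, dist x y ≤ σ}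

/-- Euclidean norm of the first `d-1` coordinates of `x ∈ ℝ^d`. -/
noncomputable def projNorm (d : ℕ) (x : EuclideanSpace ℝ (Fin d)) : ℝ :=
  Real.sqrt (∑ i ∈ Finset.univ.filter (fun i : Fin d => (i : ℕ) < d - 1), (x i) ^ 2)

/-- The ratio `r(x) = ‖(x_1,…,x_{d-1})‖ / x_d`. -/
noncomputable def ratioFn (d : ℕ) (hd : 0 < d) (x : EuclideanSpace ℝ (Fin d)) : ℝ :=
  projNorm d x / x ⟨d - 1, Nat.sub_lt hd one_pos⟩

/-- The center `c(R) = (R,…,R,1-R)`. -/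
noncomputable def centerR (d : ℕ) (R : ℝ) : EuclideanSpace ℝ (Fin d) :=
  WithLp.toLp 2 (fun i => if (i : ℕ) = d - 1 then 1 - R else R)

/-- The quantity `a(d,R)`. -/
noncomputable def aDR (d : ℕ) (R : ℝ) : ℝ :=
  ((1 - R) * Real.sqrt (((d : ℝ) - 1) * R ^ 2 - 2 * R + 1) - Real.sqrt ((d : ℝ) - 1) * R ^ 2) /
    ((d : ℝ) * R ^ 2 - 2 * R + 1)

/-- The quantity `r(d,R) = (a(d,R)⁻² - 1)^{1/2}`. -/
noncomputable def rDR (d : ℕ) (R : ℝ) : ℝ :=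
  Real.sqrt ((aDR d R) ⁻¹ ^ 2 - 1)


lemma rDR_closed (d : ℕ) (hd : 2 ≤ d) (R : ℝ) (hR0 : 0 ≤ R) (hR : R < 1/2) :
    rDR d R = R * (Real.sqrt ((d:ℝ)-1) * (1-R) + Real.sqrt (((d:ℝ)-1)*R^2 - 2*R + 1)) / (1 - 2*R) := by
  have hn : (1:ℝ) ≤ (d:ℝ) - 1 := by
    have : (2:ℝ) ≤ (d:ℝ) := by exact_mod_cast hd
    linarith
  have hu : (0:ℝ) < 1 - 2*R := by linarith
  set sn := Real.sqrt ((d:ℝ)-1) with hsndef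
  set q1 := Real.sqrt (((d:ℝ)-1)*R^2 - 2*R + 1) with hq1def
  have hQ1 : (0:ℝ) < ((d:ℝ)-1)*R^2 - 2*R + 1 := by nlinarith [sq_nonneg (1-R), sq_nonneg R]
  have hQ2 : (0:ℝ) < (d:ℝ)*R^2 - 2*R + 1 := by nlinarith [sq_nonneg (1-R), sq_nonneg R]
  have hq1 : q1^2 = ((d:ℝ)-1)*R^2 - 2*R + 1 := Real.sq_sqrt hQ1.le
  have hsn : sn^2 = (d:ℝ)-1 := Real.sq_sqrt (by linarith)
  have hq1pos : 0 < q1 := Real.sqrt_pos.mpr hQ1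
  have hsn0 : 0 ≤ sn := Real.sqrt_nonneg _
  have hfac : ((1-R)*q1 - sn*R^2) * ((1-R)*q1 + sn*R^2)
      = (1-2*R) * ((d:ℝ)*R^2 - 2*R + 1) := by
    have h : ((1-R)*q1 - sn*R^2) * ((1-R)*q1 + sn*R^2)
        = (1-R)^2 * q1^2 - sn^2 * R^4 := by ring
    rw [h, hq1, hsn]; ring
  have hfac2 : 0 < ((1-R)*q1 + sn*R^2) := by nlinarith
  have hnum : 0 < (1-R)*q1 - sn*R^2 := by nlinarith [mul_pos hu hQ2]
  have haDR : aDR d R = ((1-R)*q1 - sn*R^2) / ((d:ℝ)*R^2 - 2*R + 1) := rfl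
  have hb : (aDR d R)⁻¹ = ((1-R)*q1 + sn*R^2)/(1-2*R) := by
    rw [haDR, inv_div, div_eq_div_iff hnum.ne' hu.ne']
    linear_combination -hfac
  have hXY : ((1-R)*q1 + sn*R^2)^2 - (1-2*R)^2 = (R*(sn*(1-R)+q1))^2 := by
    linear_combination (1-2*R)*hq1 - R^2*(1-2*R)*hsn
  have hstep : (aDR d R)⁻¹^2 - 1 = (R*(sn*(1-R)+q1)/(1-2*R))^2 := by
    rw [hb, div_pow, div_pow, ← hXY]
    rw [sub_div, div_self (pow_ne_zero 2 hu.ne')]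
  have hY0 : 0 ≤ R*(sn*(1-R)+q1)/(1-2*R) :=
    div_nonneg (mul_nonneg hR0 (by nlinarith)) hu.le
  rw [rDR, hstep, Real.sqrt_sq hY0]

lemma rDR_key (d : ℕ) (hd : 2 ≤ d) (R : ℝ) (hR0 : 0 ≤ R) (hR : R < 1/2) :
    R * Real.sqrt (1 + (rDR d R)^2) + R * Real.sqrt ((d:ℝ)-1) ≤ rDR d R * (1 - R) := by
  have hn : (1:ℝ) ≤ (d:ℝ) - 1 := by
    have : (2:ℝ) ≤ (d:ℝ) := by exact_mod_cast hd
    linarith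
  have hu : (0:ℝ) < 1 - 2*R := by linarith
  set sn := Real.sqrt ((d:ℝ)-1) with hsndef
  set q1 := Real.sqrt (((d:ℝ)-1)*R^2 - 2*R + 1) with hq1def
  have hQ1 : (0:ℝ) < ((d:ℝ)-1)*R^2 - 2*R + 1 := by nlinarith [sq_nonneg (1-R), sq_nonneg R]
  have hq1 : q1^2 = ((d:ℝ)-1)*R^2 - 2*R + 1 := Real.sq_sqrt hQ1.le
  have hsn : sn^2 = (d:ℝ)-1 := Real.sq_sqrt (by linarith)
  have hq1pos : 0 < q1 := Real.sqrt_pos.mpr hQ1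
  have hsn0 : 0 ≤ sn := Real.sqrt_nonneg _
  set K := rDR d R with hKdef
  have hKcl : K = R*(sn*(1-R)+q1)/(1-2*R) := by
    rw [hKdef, rDR_closed d hd R hR0 hR]
  have hKu : K*(1-2*R) = R*(sn*(1-R)+q1) := by
    rw [hKcl, div_mul_cancel₀ _ hu.ne']
  have hK0 : 0 ≤ K := Real.sqrt_nonneg _
  have h1 : (K*(1-R) - R*sn)*(1-2*R) = R*(sn*R^2+(1-R)*q1) := by
    linear_combination (1-R)*hKu
  have hRHS : 0 ≤ R*(sn*R^2+(1-R)*q1) := by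
    apply mul_nonneg hR0; nlinarith
  have hKB0 : 0 ≤ K*(1-R) - R*sn := by nlinarith [h1, hRHS, hu]
  have h2 : ((K*(1-R)-R*sn)^2 - R^2*(1+K^2)) * (1-2*R)^2 = 0 := by
    linear_combination ((K*(1-R)-R*sn)*(1-2*R) + R*(sn*R^2+(1-R)*q1)) * h1
      - R^2*(K*(1-2*R) + R*(sn*(1-R)+q1)) * hKu + R^2*(1-2*R)*hq1 - R^4*(1-2*R)*hsn
  have hsq2 : (K*(1-R)-R*sn)^2 = R^2*(1+K^2) := by
    have h3 := (mul_eq_zero.mp h2).resolve_right (by positivity)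
    linarith [h3]
  have hs : R * Real.sqrt (1 + K^2) = K*(1-R) - R*sn := by
    have e1 : Real.sqrt (R^2*(1+K^2)) = R * Real.sqrt (1+K^2) := by
      rw [Real.sqrt_mul (sq_nonneg R), Real.sqrt_sq hR0]
    have e2 : Real.sqrt ((K*(1-R)-R*sn)^2) = K*(1-R)-R*sn := Real.sqrt_sq hKB0
    rw [← e1, ← hsq2, e2]
  rw [hs]; ring_nf; nlinarith [hs]


lemma dist_pi {d : ℕ} (x y : EuclideanSpace ℝ (Fin d)) :
    dist x y = Real.sqrt (∑ i, (x i - y i)^2) := by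
  rw [EuclideanSpace.dist_eq]
  congr 1
  exact Finset.sum_congr rfl fun i _ => by rw [Real.dist_eq, sq_abs]

lemma sum_sq_le_of_dist_le {d : ℕ} {x y : EuclideanSpace ℝ (Fin d)} {r : ℝ}
    (h : dist x y ≤ r) : ∑ i, (x i - y i)^2 ≤ r^2 := by
  have h0 : (0:ℝ) ≤ ∑ i, (x i - y i)^2 := Finset.sum_nonneg fun i _ => sq_nonneg _
  rw [dist_pi] at h
  calc ∑ i, (x i - y i)^2 = (Real.sqrt (∑ i, (x i - y i)^2))^2 := (Real.sq_sqrt h0).symm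
    _ ≤ r^2 := pow_le_pow_left₀ (Real.sqrt_nonneg _) h 2

set_option maxHeartbeats 2000000 in

set_option maxHeartbeats 1000000 in
lemma geo (d : ℕ) (hd : 2 ≤ d) (R : ℝ) (hR0 : 0 ≤ R) (hR : R < 1/2) (h0 : 0 < d)
    (x : EuclideanSpace ℝ (Fin d)) (hx : x ∈ Metric.closedBall (centerR d R) R) :
    ratioFn d h0 x ≤ rDR d R := by
  set j : Fin d := ⟨d - 1, Nat.sub_lt h0 one_pos⟩ with hj
  -- extract the sum inequality
  have hdist : dist x (centerR d R) ≤ R := Metric.mem_closedBall.mp hx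
  have hsum : ∑ i, (x i - centerR d R i)^2 ≤ R^2 := by
    rw [EuclideanSpace.dist_eq] at hdist
    have h1 : (0:ℝ) ≤ ∑ i, dist (x i) (centerR d R i) ^ 2 :=
      Finset.sum_nonneg fun i _ => sq_nonneg _
    have h2 := Real.sq_sqrt h1
    have h3 : (Real.sqrt (∑ i, dist (x i) (centerR d R i) ^ 2))^2 ≤ R^2 := by
      apply pow_le_pow_left₀ (Real.sqrt_nonneg _) hdist
    rw [h2] at h3
    calc ∑ i, (x i - centerR d R i)^2 = ∑ i, dist (x i) (centerR d R i) ^ 2 := by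
          simp [Real.dist_eq, sq_abs]
      _ ≤ R^2 := h3
  set F := Finset.univ.filter (fun i : Fin d => (i : ℕ) < d - 1) with hF
  have hFc : Finset.univ.filter (fun i : Fin d => ¬((i : ℕ) < d - 1)) = {j} := by
    ext i
    simp only [Finset.mem_filter, Finset.mem_univ, true_and, Finset.mem_singleton]
    constructor
    · intro h
      have := i.isLt
      apply Fin.ext
      simp only [hj]
      omega
    · intro h; rw [h]; simp [hj]
  have hsplit : (∑ i ∈ F, (x i - R)^2) + (x j - (1-R))^2 ≤ R^2 := by
    have := (Finset.sum_filter_add_sum_filter_not Finset.univ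
      (fun i : Fin d => (i : ℕ) < d - 1) (fun i => (x i - centerR d R i)^2)).symm
    rw [hFc, Finset.sum_singleton] at this
    have hcj : centerR d R j = 1 - R := by simp [centerR, hj]
    have hsF : ∑ i ∈ F, (x i - centerR d R i)^2 = ∑ i ∈ F, (x i - R)^2 := by
      apply Finset.sum_congr rfl
      intro i hi
      rw [hF, Finset.mem_filter] at hi
      have : centerR d R i = R := by
        simp only [centerR]
        rw [if_neg]; omega
      rw [this]
    rw [this, hsF, hcj] at hsum
    exact hsum
  set S1 := ∑ i ∈ F, (x i - R)^2 with hS1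
  have hS10 : 0 ≤ S1 := Finset.sum_nonneg fun i _ => sq_nonneg _
  set s := Real.sqrt S1 with hsdef
  have hs2 : s^2 = S1 := Real.sq_sqrt hS10
  have hs0 : 0 ≤ s := Real.sqrt_nonneg _
  set w := x j - (1-R) with hwdef
  have hsw : s^2 + w^2 ≤ R^2 := by rw [hs2]; linarith
  have hwR : -R ≤ w := by nlinarith [sq_nonneg s]
  have hxjpos : 0 < x j := by
    have : x j = 1 - R + w := by rw [hwdef]; ring
    rw [this]; linarith
  -- cardinality bound
  have hcard : (F.card : ℝ) ≤ (d:ℝ) - 1 := by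
    have h1 : F ⊆ Finset.univ.erase j := by
      intro i hi
      rw [hF, Finset.mem_filter] at hi
      rw [Finset.mem_erase]
      refine ⟨?_, Finset.mem_univ i⟩
      intro h; rw [h] at hi; simp [hj] at hi
    have h2 := Finset.card_le_card h1
    rw [Finset.card_erase_of_mem (Finset.mem_univ j), Finset.card_univ, Fintype.card_fin] at h2
    have : (1:ℕ) ≤ d := by omega
    have h3 : (F.card : ℝ) ≤ ((d - 1 : ℕ) : ℝ) := by exact_mod_cast h2
    rw [Nat.cast_sub this] at h3
    simpa using h3
  set sn := Real.sqrt ((d:ℝ)-1) with hsndef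
  have hn1 : (1:ℝ) ≤ (d:ℝ) - 1 := by
    have : (2:ℝ) ≤ (d:ℝ) := by exact_mod_cast hd
    linarith
  have hsn2 : sn^2 = (d:ℝ)-1 := Real.sq_sqrt (by linarith)
  have hsn0 : 0 ≤ sn := Real.sqrt_nonneg _
  -- bound on projNorm
  have hP : projNorm d x ≤ R * sn + s := by
    have hT2 : (∑ i ∈ F, (x i - R))^2 ≤ (F.card : ℝ) * S1 := by
      have := Finset.sum_mul_sq_le_sq_mul_sq F (fun _ => (1:ℝ)) (fun i => x i - R)
      simpa [hS1] using this
    have hT : ∑ i ∈ F, (x i - R) ≤ sn * s := by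
      nlinarith [hT2, mul_nonneg hsn0 hs0, mul_nonneg hS10 (sub_nonneg.mpr hcard)]
    have hexp : ∑ i ∈ F, (x i)^2
        = S1 + 2*R*(∑ i ∈ F, (x i - R)) + (F.card : ℝ)*R^2 := by
      have h1 : ∑ i ∈ F, (x i)^2 = ∑ i ∈ F, ((x i - R)^2 + 2*R*(x i - R) + R^2) :=
        Finset.sum_congr rfl (fun i _ => by ring)
      rw [h1, Finset.sum_add_distrib, Finset.sum_add_distrib, Finset.sum_const,
        nsmul_eq_mul, ← Finset.mul_sum, hS1]
    have h2RT : 2*R*(∑ i ∈ F, (x i - R)) ≤ 2*R*(sn*s) := by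
      apply mul_le_mul_of_nonneg_left hT; linarith
    have hcardR : (F.card:ℝ)*R^2 ≤ ((d:ℝ)-1)*R^2 :=
      mul_le_mul_of_nonneg_right hcard (sq_nonneg R)
    have hRsn : R^2*sn^2 = ((d:ℝ)-1)*R^2 := by rw [hsn2]; ring
    have hsum2 : ∑ i ∈ F, (x i)^2 ≤ (R*sn + s)^2 := by
      have hex2 : (R*sn+s)^2 = R^2*sn^2 + 2*R*(sn*s) + s^2 := by ring
      rw [hex2, hRsn]
      rw [hexp]
      linarith [hs2]
    have := Real.sqrt_le_sqrt hsum2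
    rw [Real.sqrt_sq (by positivity : (0:ℝ) ≤ R*sn + s)] at this
    rw [projNorm, ← hF]
    exact this
  set k := rDR d R with hk
  have hk0 : 0 ≤ k := Real.sqrt_nonneg _
  have key := rDR_key d hd R hR0 hR
  rw [← hsndef, ← hk] at key
  have hs_le : s ≤ k*w + R*Real.sqrt (1+k^2) := by
    set u := Real.sqrt (1+k^2) with hu
    have hu2 : u^2 = 1 + k^2 := Real.sq_sqrt (by positivity)
    have hu0 : 0 ≤ u := Real.sqrt_nonneg _
    have huk : k ≤ u := by nlinarith
    nlinarith [sq_nonneg (k*R + u*w), mul_nonneg hk0 (by linarith : (0:ℝ) ≤ w + R),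
      mul_nonneg (sub_nonneg.mpr huk) hR0, hsw, hs0]
  have hgoal : ratioFn d h0 x = projNorm d x / x j := rfl
  rw [hgoal, div_le_iff₀ hxjpos]
  have hxj : x j = 1 - R + w := by rw [hwdef]; ring
  have : k * x j = k*(1-R) + k*w := by rw [hxj]; ring
  rw [this]
  linarith [hP, hs_le, key]


set_option maxHeartbeats 2000000 in
/-- Main lattice step: there is a lattice point `y` in the closed ball `B(c(τ),τ)`
different from the corner `y₀ = (τ,…,τ,1)`. -/
lemma exists_good_lattice_point (d : ℕ) (hd : 2 ≤ d) (q : ℕ) (hq2 : 2 ≤ q)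
    (ν : EuclideanSpace ℝ (Fin d)) (p : Fin d → ℕ) (hν : ∀ i, ν i = (p i : ℝ) / (q : ℝ))
    (hτ : covRad d (latticeNu d ν) < 1 / 2) :
    ∃ y ∈ latticeNu d ν,
      dist (centerR d (covRad d (latticeNu d ν))) y ≤ covRad d (latticeNu d ν) ∧
      y ≠ WithLp.toLp 2 (fun (i : Fin d) => if (i : ℕ) = d - 1 then (1:ℝ) else covRad d (latticeNu d ν)) := by
  set L := latticeNu d ν with hL
  set τ := covRad d L with hτdef
  set c := centerR d τ with hc
  set y₀ : EuclideanSpace ℝ (Fin d) :=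
    WithLp.toLp 2 (fun i => if (i : ℕ) = d - 1 then (1:ℝ) else τ) with hy₀
  have hd0 : 0 < d := by omega
  have hy₀j : ∀ i : Fin d, (i:ℕ) = d - 1 → y₀ i = 1 := by
    intro i hi; rw [hy₀]; simp [hi]
  have hy₀i : ∀ i : Fin d, (i:ℕ) ≠ d - 1 → y₀ i = τ := by
    intro i hi; rw [hy₀]; simp [hi]
  set j : Fin d := ⟨d - 1, Nat.sub_lt hd0 one_pos⟩ with hj
  have hq0 : (0:ℝ) < q := by positivity
  set S := {σ : ℝ | 0 < σ ∧ ∀ x : EuclideanSpace ℝ (Fin d), ∃ y ∈ L, dist x y ≤ σ} with hS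
  have hbdd : BddBelow S := ⟨0, fun σ hσ => hσ.1.le⟩
  have hd1 : (1:ℝ) ≤ Real.sqrt d := by
    rw [show (1:ℝ) = Real.sqrt 1 by simp]
    exact Real.sqrt_le_sqrt (by exact_mod_cast Nat.one_le_of_lt hd)
  have hne : S.Nonempty := by
    refine ⟨Real.sqrt d, by linarith, fun x => ?_⟩
    refine ⟨WithLp.toLp 2 (fun i => (round (x i) : ℝ)), ⟨fun i => round (x i), 0, fun i => by simp⟩, ?_⟩
    rw [dist_pi]
    apply Real.sqrt_le_sqrt
    calc ∑ i, (x i - (round (x i) : ℝ))^2 ≤ ∑ _i : Fin d, (1:ℝ) := by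
          apply Finset.sum_le_sum
          intro i _
          have h1 := abs_sub_round (x i)
          nlinarith [sq_abs (x i - (round (x i):ℝ)), abs_nonneg (x i - (round (x i):ℝ))]
      _ = (d:ℝ) := by simp
  have hτ0 : 0 ≤ τ := le_csInf hne fun σ hσ => hσ.1.le
  have hcov : ∀ σ, τ < σ → ∀ x : EuclideanSpace ℝ (Fin d), ∃ y ∈ L, dist x y ≤ σ := by
    intro σ hσ x
    obtain ⟨b, hb, hbσ⟩ := (csInf_lt_iff hbdd hne).mp hσ
    obtain ⟨y, hyL, hyd⟩ := hb.2 x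
    exact ⟨y, hyL, hyd.trans hbσ.le⟩
  -- c basic facts
  have hcj : c j = 1 - τ := by simp [hc, centerR, hj]
  have hci : ∀ i : Fin d, (i:ℕ) ≠ d - 1 → c i = τ := by
    intro i hi; simp [hc, centerR, hi]
  have hcabs : ∀ i : Fin d, |c i| ≤ 1 := by
    intro i
    rw [hc]
    simp only [centerR]
    split <;> rw [abs_le] <;> constructor <;> linarith
  -- finiteness of lattice points in a large ball
  have hfin : (L ∩ Metric.closedBall c (Real.sqrt d)).Finite := by
    set N : ℤ := 2*d*q with hN
    have hsub : L ∩ Metric.closedBall c (Real.sqrt d) ⊆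
        (fun (m : Fin d → ℤ) => (WithLp.toLp 2 (fun i => (m i : ℝ)/(q:ℝ)) : EuclideanSpace ℝ (Fin d))) ''
          (Set.univ.pi fun _ => Set.Icc (-N) N) := by
      rintro x ⟨⟨z, t, hx⟩, hxball⟩
      refine ⟨fun i => (q:ℤ) * z i + t * (p i : ℤ), ?_, ?_⟩
      · intro i _
        simp only [Set.mem_Icc]
        have hxc : |x i - c i| ≤ Real.sqrt d := by
          have h1 : (x i - c i)^2 ≤ (Real.sqrt d)^2 :=
            le_trans (Finset.single_le_sum (fun a _ => sq_nonneg ((x a) - (c a)))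
              (Finset.mem_univ i)) (sum_sq_le_of_dist_le (Metric.mem_closedBall.mp hxball))
          nlinarith [abs_nonneg (x i - c i), sq_abs (x i - c i), Real.sqrt_nonneg (d:ℝ)]
        have hxabs : |x i| ≤ 2 * Real.sqrt d := by
          calc |x i| = |(x i - c i) + c i| := by ring_nf
            _ ≤ |x i - c i| + |c i| := abs_add_le _ _
            _ ≤ Real.sqrt d + 1 := add_le_add hxc (hcabs i)
            _ ≤ 2 * Real.sqrt d := by linarith
        have hsd : Real.sqrt d ≤ (d:ℝ) := by
          have h1 : ((d:ℝ)) ≤ ((d:ℝ))^2 := by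
            nlinarith [(Nat.one_le_cast.mpr (Nat.one_le_of_lt hd) : (1:ℝ) ≤ (d:ℝ))]
          have h2 := Real.sqrt_le_sqrt h1
          rwa [Real.sqrt_sq (by positivity)] at h2
        have hcast : (((q:ℤ) * z i + t * (p i : ℤ) : ℤ) : ℝ) = (q:ℝ) * x i := by
          rw [hx i, hν i]
          push_cast
          field_simp
        have habs : |(((q:ℤ) * z i + t * (p i : ℤ) : ℤ) : ℝ)| ≤ (N:ℝ) := by
          rw [hcast, abs_mul, abs_of_pos hq0, hN]
          push_cast
          calc (q:ℝ) * |x i| ≤ (q:ℝ) * (2 * Real.sqrt d) :=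
                mul_le_mul_of_nonneg_left hxabs hq0.le
            _ ≤ (q:ℝ) * (2 * d) := by nlinarith
            _ = 2 * d * q := by ring
        have h2 : |(q:ℤ) * z i + t * (p i : ℤ)| ≤ N := by exact_mod_cast habs
        exact abs_le.mp h2
      · ext i
        show (((q:ℤ) * z i + t * (p i : ℤ) : ℤ) : ℝ) / (q:ℝ) = x i
        rw [hx i, hν i]
        push_cast
        field_simp
    exact Set.Finite.subset (Set.Finite.image _ (Set.Finite.pi fun _ => Set.finite_Icc _ _)) hsub
  -- 0 is in the big ball
  have h0L : (0 : EuclideanSpace ℝ (Fin d)) ∈ L := ⟨0, 0, fun i => by simp⟩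
  have h0ball : (0 : EuclideanSpace ℝ (Fin d)) ∈ Metric.closedBall c (Real.sqrt d) := by
    rw [Metric.mem_closedBall, dist_pi]
    apply Real.sqrt_le_sqrt
    calc ∑ i, ((0: EuclideanSpace ℝ (Fin d)) i - c i)^2 ≤ ∑ _i : Fin d, (1:ℝ) := by
          apply Finset.sum_le_sum
          intro i _
          have h1 := hcabs i
          have h2 : ((0: EuclideanSpace ℝ (Fin d)) i - c i)^2 = (c i)^2 := by
            simp
          rw [h2]
          nlinarith [sq_abs (c i), abs_nonneg (c i)]
      _ = (d:ℝ) := by simp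
  have h0ne : (0 : EuclideanSpace ℝ (Fin d)) ≠ y₀ := by
    intro h
    have h1 : (0 : EuclideanSpace ℝ (Fin d)) j = y₀ j := by rw [h]
    rw [hy₀j j (by simp [hj])] at h1
    have h2 : (0 : EuclideanSpace ℝ (Fin d)) j = 0 := rfl
    rw [h2] at h1
    norm_num at h1
  set G := (L ∩ Metric.closedBall c (Real.sqrt d)) \ {y₀} with hG
  have hGfin : G.Finite := hfin.subset Set.diff_subset
  have hGne : G.Nonempty := ⟨0, ⟨h0L, h0ball⟩, h0ne⟩
  obtain ⟨y₁, hy₁G, hy₁min⟩ := Set.exists_min_image G (fun y => dist c y) hGfin hGne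
  by_cases hcase : dist c y₁ ≤ τ
  · exact ⟨y₁, hy₁G.1.1, hcase, hy₁G.2⟩
  · exfalso
    push_neg at hcase
    set δ := (dist c y₁ - τ)/2 with hδ
    have hδ0 : 0 < δ := by rw [hδ]; linarith
    set c' : EuclideanSpace ℝ (Fin d) :=
      WithLp.toLp 2 (fun i => if (i:ℕ) = d - 1 then 1 - τ - δ else τ) with hc'
    obtain ⟨y, hyL, hyd⟩ := hcov (τ + δ/2) (by linarith) c'
    -- dist c c' = δ
    have hccj : ∀ (u v : EuclideanSpace ℝ (Fin d)), (∀ i, i ≠ j → u i = v i) →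
        dist u v = |u j - v j| := by
      intro u v huv
      rw [dist_pi]
      rw [show ∑ i, (u i - v i)^2 = ∑ i, if i = j then (u j - v j)^2 else 0 from
        Finset.sum_congr rfl fun i _ => by
          by_cases h : i = j
          · subst h; simp
          · rw [if_neg h, huv i h]; ring]
      rw [Finset.sum_ite_eq' Finset.univ j, if_pos (Finset.mem_univ j), Real.sqrt_sq_eq_abs]
    have hoff : ∀ i : Fin d, i ≠ j → (i:ℕ) ≠ d - 1 := by
      intro i hij h
      exact hij (Fin.ext (by simp [hj, h]))
    have hc'j : ∀ i : Fin d, (i:ℕ) = d - 1 → c' i = 1 - τ - δ := by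
      intro i hi; rw [hc']; simp [hi]
    have hc'i : ∀ i : Fin d, (i:ℕ) ≠ d - 1 → c' i = τ := by
      intro i hi; rw [hc']; simp [hi]
    have hjval : (j:ℕ) = d - 1 := by simp [hj]
    have hdcc' : dist c c' = δ := by
      rw [hccj c c' (fun i hij => by rw [hci i (hoff i hij), hc'i i (hoff i hij)])]
      rw [hcj, hc'j j hjval]
      rw [show (1 - τ - (1 - τ - δ)) = δ by ring, abs_of_pos hδ0]
    have hdc'y₀ : dist c' y₀ = τ + δ := by
      rw [hccj c' y₀ (fun i hij => by rw [hc'i i (hoff i hij), hy₀i i (hoff i hij)])]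
      rw [hc'j j hjval, hy₀j j hjval]
      rw [show (1 - τ - δ - 1) = -(τ + δ) by ring, abs_neg, abs_of_pos (by linarith)]
    have hdcy : dist c y ≤ τ + δ/2 + δ := by
      calc dist c y ≤ dist c c' + dist c' y := dist_triangle _ _ _
        _ ≤ δ + (τ + δ/2) := by
            rw [hdcc']
            linarith [hyd]
        _ = τ + δ/2 + δ := by ring
    have hylt : dist c y < dist c y₁ := by
      have := hδ
      linarith [hdcy, hcase]
    have hyne : y ≠ y₀ := by
      intro h
      rw [h, hdc'y₀] at hyd
      linarith
    have hyG : y ∈ G := by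
      refine ⟨⟨hyL, ?_⟩, hyne⟩
      rw [Metric.mem_closedBall, dist_comm]
      have : dist c y₁ ≤ Real.sqrt d := by
        rw [dist_comm]
        exact Metric.mem_closedBall.mp hy₁G.1.2
      linarith
    exact absurd (hy₁min y hyG) (by linarith)


lemma mem_cb {d : ℕ} {x y : EuclideanSpace ℝ (Fin d)} {r : ℝ} (h : dist x y ≤ r) :
    y ∈ Metric.closedBall x r := Metric.mem_closedBall'.mpr h

lemma covRad_lattice_nonneg (d : ℕ) (hd0 : 0 < d) (ν : EuclideanSpace ℝ (Fin d)) :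
    0 ≤ covRad d (latticeNu d ν) := by
  apply le_csInf
  · refine ⟨Real.sqrt d, Real.sqrt_pos.mpr (by positivity), fun x => ?_⟩
    refine ⟨WithLp.toLp 2 (fun i => (round (x i) : ℝ)), ⟨fun i => round (x i), 0, fun i => by simp⟩, ?_⟩
    rw [EuclideanSpace.dist_eq]
    apply Real.sqrt_le_sqrt
    calc ∑ i, dist (x i) ((round (x i) : ℝ))^2 ≤ ∑ _i : Fin d, (1:ℝ) := by
          apply Finset.sum_le_sum
          intro i _
          have h1 := abs_sub_round (x i)
          rw [Real.dist_eq]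
          nlinarith [abs_nonneg (x i - (round (x i):ℝ))]
      _ = (d:ℝ) := by simp
  · exact fun σ hσ => hσ.1.le

set_option maxHeartbeats 2000000 in
/-- If `τ(L_ν) < 1/2` then some iterate `tν mod 1` lies in `B(c(τ), τ)`, and in
particular has ratio at most `r(d,τ)`. -/
theorem exists_iterate_in_ball (d : ℕ) (hd : 2 ≤ d) (p : Fin d → ℕ) (q : ℕ)
    (hp : ∀ i, 0 < p i) (hq : ∀ i, p i < q)
    (hgcd : Nat.gcd (Finset.univ.gcd p) q = 1)
    (ν : EuclideanSpace ℝ (Fin d)) (hν : ∀ i, ν i = (p i : ℝ) / (q : ℝ))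
    (hτ : covRad d (latticeNu d ν) < 1 / 2) :
    ∃ t : ℕ, 1 ≤ t ∧ t ≤ q - 1 ∧
      WithLp.toLp 2 (fun i => Int.fract ((t : ℝ) * ν i)) ∈
        Metric.closedBall (centerR d (covRad d (latticeNu d ν))) (covRad d (latticeNu d ν)) ∧
      ratioFn d (by omega) (WithLp.toLp 2 (fun i => Int.fract ((t : ℝ) * ν i)))
        ≤ rDR d (covRad d (latticeNu d ν)) := by
  have hd0 : 0 < d := by omega
  have hq2 : 2 ≤ q := by
    have h1 := hp ⟨0, hd0⟩
    have h2 := hq ⟨0, hd0⟩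
    omega
  set L := latticeNu d ν with hL
  set τ := covRad d L with hτdef
  have hτ0 : 0 ≤ τ := covRad_lattice_nonneg d hd0 ν
  set c := centerR d τ with hc
  set j : Fin d := ⟨d - 1, Nat.sub_lt hd0 one_pos⟩ with hj
  have hjval : (j:ℕ) = d - 1 := rfl
  have hcj : c j = 1 - τ := by rw [hc]; simp [centerR, hj]
  have hci : ∀ i : Fin d, (i:ℕ) ≠ d - 1 → c i = τ := by
    intro i hi; rw [hc]; simp [centerR, hi]
  have hoff : ∀ i : Fin d, i ≠ j → (i:ℕ) ≠ d - 1 := by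
    intro i hij h
    exact hij (Fin.ext (by simp [hj, h]))
  obtain ⟨y, hyL, hyc, hyne⟩ := exists_good_lattice_point d hd q hq2 ν p hν hτ
  have hsum : ∑ i, (c i - y i)^2 ≤ τ^2 := sum_sq_le_of_dist_le hyc
  have hterm : ∀ i : Fin d, (c i - y i)^2 ≤ τ^2 := fun i =>
    le_trans (Finset.single_le_sum (fun a _ => sq_nonneg ((c a) - (y a)))
      (Finset.mem_univ i)) hsum
  have hyj_le : y j ≤ 1 := by
    have := hterm j
    rw [hcj] at this
    nlinarith
  have hyj_ge : 1 - 2*τ ≤ y j := by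
    have := hterm j
    rw [hcj] at this
    nlinarith
  have hyi : ∀ i : Fin d, i ≠ j → 0 ≤ y i ∧ y i ≤ 2*τ := by
    intro i hij
    have h1 := hterm i
    rw [hci i (hoff i hij)] at h1
    constructor <;> nlinarith
  -- y j < 1
  have hyj_lt : y j < 1 := by
    rcases lt_or_eq_of_le hyj_le with h | h
    · exact h
    · exfalso
      apply hyne
      have hsplit := Finset.sum_erase_add Finset.univ (fun i => (c i - y i)^2)
        (Finset.mem_univ j)
      have hj2 : (c j - y j)^2 = τ^2 := by rw [hcj, h]; ring
      have hsplit' : ∑ i ∈ Finset.univ.erase j, (c i - y i)^2 + (c j - y j)^2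
          = ∑ i : Fin d, (c i - y i)^2 := by simpa using hsplit
      have herase : ∑ i ∈ Finset.univ.erase j, (c i - y i)^2 ≤ 0 := by
        linarith [hsum, hj2, hsplit']
      have hsum0 : ∑ i ∈ Finset.univ.erase j, (c i - y i)^2 = 0 :=
        le_antisymm herase (Finset.sum_nonneg fun i _ => sq_nonneg _)
      have hzero : ∀ i ∈ Finset.univ.erase j, (c i - y i)^2 = 0 :=
        (Finset.sum_eq_zero_iff_of_nonneg (fun i _ => sq_nonneg _)).mp hsum0
      ext i
      by_cases hij : i = j
      · rw [hij, ← h]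
        simp [hj]
      · have hi := hzero i (Finset.mem_erase.mpr ⟨hij, Finset.mem_univ i⟩)
        have : c i = y i := by nlinarith [sq_nonneg (c i - y i)]
        rw [← this, hci i (hoff i hij)]
        simp [hoff i hij]
        rfl
  have hybound : ∀ i : Fin d, 0 ≤ y i ∧ y i < 1 := by
    intro i
    by_cases hij : i = j
    · rw [hij]; exact ⟨by linarith, hyj_lt⟩
    · obtain ⟨h1, h2⟩ := hyi i hij
      exact ⟨h1, by linarith⟩
  obtain ⟨z, t, hyzt⟩ := hyL
  have hqZ : (0:ℤ) < (q:ℤ) := by exact_mod_cast Nat.lt_of_lt_of_le Nat.zero_lt_two hq2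
  have hqR : ((q:ℝ)) ≠ 0 := by positivity
  set t' : ℕ := (t % (q:ℤ)).toNat with ht'def
  have htmod0 : 0 ≤ t % (q:ℤ) := Int.emod_nonneg t hqZ.ne'
  have htmodlt : t % (q:ℤ) < (q:ℤ) := Int.emod_lt_of_pos t hqZ
  have ht' : ((t':ℕ):ℤ) = t % (q:ℤ) := Int.toNat_of_nonneg htmod0
  have hfract1 : ∀ i, Int.fract ((t:ℝ) * ν i) = y i := by
    intro i
    rw [show (t:ℝ) * ν i = ((z i : ℝ) + (t:ℝ) * ν i) - (z i : ℝ) by ring]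
    rw [show ((z i : ℝ) + (t:ℝ) * ν i) - (z i : ℝ) = (-(z i) : ℤ) + ((z i : ℝ) + (t:ℝ) * ν i) by push_cast; ring]
    rw [Int.fract_intCast_add, ← hyzt i]
    exact Int.fract_eq_self.mpr ⟨(hybound i).1, (hybound i).2⟩
  have hfract2 : ∀ i, Int.fract ((t':ℝ) * ν i) = Int.fract ((t:ℝ) * ν i) := by
    intro i
    rw [Int.fract_eq_fract]
    refine ⟨-(t / (q:ℤ)) * (p i : ℤ), ?_⟩
    rw [hν i]
    have hcast : ((t':ℕ):ℝ) = ((t % (q:ℤ) : ℤ) : ℝ) := by exact_mod_cast ht'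
    rw [hcast]
    have hmod : ((t % (q:ℤ) : ℤ) : ℝ) = (t:ℝ) - (q:ℝ) * ((t / (q:ℤ) : ℤ) : ℝ) := by
      rw [Int.emod_def]; push_cast; ring
    rw [hmod]
    push_cast
    field_simp
    ring
  have hfract : ∀ i, Int.fract ((t':ℝ) * ν i) = y i := fun i =>
    (hfract2 i).trans (hfract1 i)
  have hyj_pos : 0 < y j := by linarith
  have ht'0 : t' ≠ 0 := by
    intro h
    have := hfract j
    rw [h] at this
    simp only [Nat.cast_zero, zero_mul, Int.fract_zero] at this
    linarith
  have ht'q : t' ≤ q - 1 := by omega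
  refine ⟨t', by omega, ht'q, ?_, ?_⟩
  · have hfun : WithLp.toLp 2 (fun i => Int.fract ((t':ℝ) * ν i)) = y := by ext i; exact hfract i
    rw [hfun]
    exact mem_cb hyc
  · have hfun : WithLp.toLp 2 (fun i => Int.fract ((t':ℝ) * ν i)) = y := by ext i; exact hfract i
    rw [hfun]
    apply geo d hd τ hτ0 hτ hd0
    exact mem_cb hyc
end

section
/- Let $\nu = (p_1/q, \ldots, p_d/q)^T$ with positive integers $p_i < q$, $\gcd(p_1,\ldots,p_d,q) = 1$, and let $L_\nu = \mathbb{Z}^d + \mathbb{Z}\nu$. Then the first successive minimum satisfies $\lambda_1(L_\nu) \geq \frac{1}{2^{d-1} q \, \tau(L_\nu)^{d-1}}$. -/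
/-- The first successive minimum of a subset of `ℝ^d` (Euclidean norm). -/
noncomputable def firstMin (d : ℕ) (L : Set (EuclideanSpace ℝ (Fin d))) : ℝ :=
  sInf {r : ℝ | ∃ x ∈ L, x ≠ 0 ∧ ‖x‖ = r}

open Module

lemma ones_mem_latticeNu (d : ℕ) (ν : EuclideanSpace ℝ (Fin d)) :
    (WithLp.toLp 2 (fun _ => (1:ℝ)) : EuclideanSpace ℝ (Fin d)) ∈ latticeNu d ν :=
  ⟨fun _ => 1, 0, fun i => by norm_num⟩

lemma firstMin_set_nonempty (d : ℕ) (hd : 0 < d) (ν : EuclideanSpace ℝ (Fin d)) :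
    {r : ℝ | ∃ x ∈ latticeNu d ν, x ≠ 0 ∧ ‖x‖ = r}.Nonempty := by
  refine ⟨_, (WithLp.toLp 2 (fun _ => (1:ℝ)) : EuclideanSpace ℝ (Fin d)), ones_mem_latticeNu d ν, ?_, rfl⟩
  intro h
  have h1 := congrArg (fun y : EuclideanSpace ℝ (Fin d) => y ⟨0, hd⟩) h
  simp only at h1
  exact one_ne_zero h1

lemma sqrt_mem_covSet (d : ℕ) (hd : 0 < d) (ν : EuclideanSpace ℝ (Fin d)) :
    Real.sqrt d ∈ {σ : ℝ | 0 < σ ∧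
      ∀ x : EuclideanSpace ℝ (Fin d), ∃ y ∈ latticeNu d ν, dist x y ≤ σ} := by
  constructor
  · exact Real.sqrt_pos.2 (by exact_mod_cast hd)
  · intro x
    refine ⟨(WithLp.toLp 2 (fun i => (round (x i) : ℝ)) : EuclideanSpace ℝ (Fin d)),
      ⟨fun i => round (x i), 0, fun i => by norm_num⟩, ?_⟩
    rw [EuclideanSpace.dist_eq]
    apply Real.sqrt_le_sqrt
    calc ∑ i, dist (x i) ((round (x i) : ℝ)) ^ 2 ≤ ∑ _i : Fin d, (1:ℝ) := by
          apply Finset.sum_le_sum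
          intro i _
          have h1 : |x i - (round (x i) : ℝ)| ≤ 1/2 := abs_sub_round (x i)
          have h2 : dist (x i) ((round (x i)):ℝ) ≤ 1 := by
            rw [Real.dist_eq]; linarith
          calc dist (x i) ((round (x i)):ℝ) ^ 2 ≤ 1^2 := by
                apply pow_le_pow_left₀ dist_nonneg h2
            _ = 1 := one_pow 2
      _ = (d : ℝ) := by simp

lemma det_int_cast_aux {d : ℕ} (W : Matrix (Fin d) (Fin d) ℤ) :
    Matrix.det (Matrix.of fun i j => ((W i j : ℤ) : ℝ)) = ((W.det : ℤ) : ℝ) := by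
  have h := (RingHom.map_det (Int.castRingHom ℝ) W).symm
  rw [RingHom.mapMatrix_apply] at h
  exact h

lemma exists_int_det (d q : ℕ) (hq : 0 < q) (p : Fin d → ℕ)
    (ν : EuclideanSpace ℝ (Fin d)) (hν : ∀ i, ν i = (p i : ℝ) / (q : ℝ))
    (v : Fin d → EuclideanSpace ℝ (Fin d)) (hv : ∀ i, v i ∈ latticeNu d ν) :
    ∃ n : ℤ, (q : ℝ) * Matrix.det (Matrix.of fun i j => v i j) = n := by
  classical
  have hq0 : ((q:ℝ)) ≠ 0 := by positivity
  choose z t hzt using hv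
  set F : (Fin d → ℝ) [⋀^Fin d]→ₗ[ℝ] ℝ := Matrix.detRowAlternating
  set νf : Fin d → ℝ := fun j => ν j with hνfdef
  set pf : Fin d → ℝ := fun j => (p j : ℝ) with hpfdef
  set zR : Fin d → Fin d → ℝ := fun i j => (z i j : ℝ) with hzRdef
  set tν : Fin d → Fin d → ℝ := fun i => (t i : ℝ) • νf with htνdef
  have hνsmul : νf = (q : ℝ)⁻¹ • pf := by
    funext j
    simp only [hνfdef, hpfdef, Pi.smul_apply, smul_eq_mul, hν j]
    ring
  have hrow : (Matrix.of fun i j => v i j) = (tν + zR : Fin d → Fin d → ℝ) := by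
    funext i j
    simp only [Matrix.of_apply, Pi.add_apply, htνdef, hzRdef, Pi.smul_apply, smul_eq_mul,
      hνfdef]
    rw [hzt i j]; ring
  have hdet : Matrix.det (Matrix.of fun i j => v i j)
      = F.toMultilinearMap (tν + zR) := by rw [hrow]; rfl
  have key : ∀ s : Finset (Fin d), ∃ n : ℤ,
      (q:ℝ) * F.toMultilinearMap (s.piecewise tν zR) = n := by
    intro s
    have hbase : s.piecewise tν zR =
        s.piecewise (fun i => (t i : ℝ) • (s.piecewise (fun _ => νf) zR) i)
          (s.piecewise (fun _ => νf) zR) := by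
      funext i
      by_cases hi : i ∈ s
      · rw [Finset.piecewise_eq_of_mem _ _ _ hi, Finset.piecewise_eq_of_mem _ _ _ hi,
          Finset.piecewise_eq_of_mem _ _ _ hi]
      · rw [Finset.piecewise_eq_of_notMem _ _ _ hi, Finset.piecewise_eq_of_notMem _ _ _ hi,
          Finset.piecewise_eq_of_notMem _ _ _ hi]
    rw [hbase, F.toMultilinearMap.map_piecewise_smul]
    rcases Nat.lt_or_ge s.card 2 with h2 | h2
    · interval_cases h : s.card
      · -- card 0
        rw [Finset.card_eq_zero] at h
        subst h
        refine ⟨(q : ℤ) * (Matrix.of z).det, ?_⟩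
        simp only [Finset.piecewise_empty, Finset.prod_empty, one_smul]
        have : F.toMultilinearMap zR = ((Matrix.of z).det : ℝ) := by
          rw [← det_int_cast_aux (Matrix.of z)]; rfl
        rw [this]; push_cast; ring
      · -- card 1
        rw [Finset.card_eq_one] at h
        obtain ⟨i0, rfl⟩ := h
        rw [Finset.piecewise_singleton, Finset.prod_singleton]
        have hup : Function.update zR i0 νf
            = Function.update zR i0 ((q:ℝ)⁻¹ • pf) := by rw [hνsmul]
        rw [hup]
        have hW : Function.update zR i0 pf
            = fun i j => (((Function.update z i0 (fun j => (p j : ℤ))) i j : ℤ) : ℝ) := by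
          funext i j
          by_cases hi : i = i0
          · subst hi; simp [Function.update_self, hpfdef]
          · simp [Function.update_of_ne hi, hzRdef]
        have hupdate : zR = Function.update zR i0 (zR i0) := by
          rw [Function.update_eq_self]
        have hsmul : F.toMultilinearMap (Function.update zR i0 ((q:ℝ)⁻¹ • pf))
            = (q:ℝ)⁻¹ • F.toMultilinearMap (Function.update zR i0 pf) := by
          exact F.toMultilinearMap.map_update_smul zR i0 _ _
        rw [hsmul]
        have hint : F.toMultilinearMap (Function.update zR i0 pf)
            = (((Matrix.of (Function.update z i0 (fun j => (p j : ℤ)))).det : ℤ) : ℝ) := by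
          rw [hW, ← det_int_cast_aux]
          rfl
        refine ⟨t i0 * (Matrix.of (Function.update z i0 (fun j => (p j : ℤ)))).det, ?_⟩
        rw [hint]
        push_cast
        try field_simp
        try ring
        rw [mul_comm (q:ℝ) _, mul_assoc _ (q:ℝ), mul_inv_cancel₀ hq0, mul_one]
    · -- card ≥ 2 : two slots equal to νf
      obtain ⟨a, ha, b, hb, hab⟩ := Finset.one_lt_card.mp h2
      have hz : F (s.piecewise (fun _ => νf) zR) = 0 := by
        apply F.map_eq_zero_of_eq _ _ hab
        rw [Finset.piecewise_eq_of_mem _ _ _ ha, Finset.piecewise_eq_of_mem _ _ _ hb]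
      refine ⟨0, ?_⟩
      have : F.toMultilinearMap (s.piecewise (fun _ => νf) zR) = 0 := hz
      rw [this, smul_zero, mul_zero]
      norm_num
  choose n hn using key
  refine ⟨∑ s : Finset (Fin d), n s, ?_⟩
  rw [hdet, F.toMultilinearMap.map_add_univ, Finset.mul_sum]
  rw [Finset.sum_congr rfl (fun s _ => hn s)]
  push_cast
  rfl

lemma basis_det_eq (d : ℕ) (v : Fin d → EuclideanSpace ℝ (Fin d)) :
    (EuclideanSpace.basisFun (Fin d) ℝ).toBasis.det v
      = Matrix.det (Matrix.of fun i j => v i j) := by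
  classical
  have h : (EuclideanSpace.basisFun (Fin d) ℝ).toBasis.toMatrix v
      = Matrix.transpose (Matrix.of fun i j => v i j) := by
    funext i j
    rw [Basis.toMatrix_apply, OrthonormalBasis.coe_toBasis_repr_apply,
      EuclideanSpace.basisFun_repr]
    rfl
  rw [Basis.det_apply, h, Matrix.det_transpose]

lemma abs_det_le_prod_norm (d : ℕ) (hd : 0 < d) (v : Fin d → EuclideanSpace ℝ (Fin d)) :
    |Matrix.det (Matrix.of fun i j => v i j)| ≤ ∏ i, ‖v i‖ := by
  classical
  obtain ⟨m, rfl⟩ : ∃ m, d = m + 1 := ⟨d - 1, (Nat.succ_pred_eq_of_pos hd).symm⟩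
  haveI : WellFoundedLT (Fin (m+1)) := inferInstance
  have hcard : finrank ℝ (EuclideanSpace ℝ (Fin (m+1))) = Fintype.card (Fin (m+1)) := by
    simp [finrank_euclideanSpace_fin]
  set b := InnerProductSpace.gramSchmidtOrthonormalBasis hcard v with hbdef
  set e := EuclideanSpace.basisFun (Fin (m+1)) ℝ with hedef
  have h2 : e.toBasis.det v = e.toBasis.det ⇑b * (b.toBasis.det v) := by
    conv_lhs => rw [AlternatingMap.eq_smul_basis_det b.toBasis e.toBasis.det]
    rw [AlternatingMap.smul_apply, smul_eq_mul, OrthonormalBasis.coe_toBasis]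
  have h3 : |b.toBasis.det v| ≤ ∏ i, ‖v i‖ := by
    rw [InnerProductSpace.gramSchmidtOrthonormalBasis_det]
    rw [Finset.abs_prod]
    apply Finset.prod_le_prod
    · intro i _
      exact abs_nonneg _
    · intro i _
      calc |inner (𝕜 := ℝ) (b i) (v i)| ≤ ‖b i‖ * ‖v i‖ := abs_real_inner_le_norm _ _
        _ = ‖v i‖ := by rw [b.orthonormal.1 i, one_mul]
  have h4 : |e.toBasis.det ⇑b| = 1 := by
    have := e.det_to_matrix_orthonormalBasis b
    rwa [Real.norm_eq_abs] at this
  calc |Matrix.det (Matrix.of fun i j => v i j)|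
      = |e.toBasis.det ⇑b| * |b.toBasis.det v| := by
        rw [← basis_det_eq, h2, abs_mul]
    _ ≤ 1 * ∏ i, ‖v i‖ := by rw [h4]; exact mul_le_mul_of_nonneg_left h3 (by norm_num)
    _ = ∏ i, ‖v i‖ := one_mul _

lemma det_ne_zero_of_li (d : ℕ) (hd : 0 < d) (v : Fin d → EuclideanSpace ℝ (Fin d))
    (hli : LinearIndependent ℝ v) :
    Matrix.det (Matrix.of fun i j => v i j) ≠ 0 := by
  classical
  have : Nonempty (Fin d) := ⟨⟨0, hd⟩⟩
  have hcard : Fintype.card (Fin d) = finrank ℝ (EuclideanSpace ℝ (Fin d)) := by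
    simp [finrank_euclideanSpace_fin]
  have hspan := hli.span_eq_top_of_card_eq_finrank hcard
  have hunit := (Module.Basis.is_basis_iff_det (e := (EuclideanSpace.basisFun (Fin d) ℝ).toBasis)).mp ⟨hli, hspan⟩
  rw [basis_det_eq] at hunit
  exact hunit.ne_zero

lemma exists_good_family (d : ℕ) (hd : 0 < d) (ν : EuclideanSpace ℝ (Fin d))
    (v1 : EuclideanSpace ℝ (Fin d)) (hv1L : v1 ∈ latticeNu d ν) (hv1 : v1 ≠ 0)
    (σ ε : ℝ) (hε : 0 < ε) (hσ : 0 < σ)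
    (hcov : ∀ x : EuclideanSpace ℝ (Fin d), ∃ y ∈ latticeNu d ν, dist x y ≤ σ) :
    ∃ v : Fin d → EuclideanSpace ℝ (Fin d), (∀ i, v i ∈ latticeNu d ν) ∧
      LinearIndependent ℝ v ∧ (∀ i : Fin d, (i : ℕ) = 0 → v i = v1) ∧
      (∀ i : Fin d, (i : ℕ) ≠ 0 → ‖v i‖ ≤ 2 * σ + ε) := by
  classical
  suffices H : ∀ k : ℕ, k ≤ d → 1 ≤ k →
      ∃ v : Fin k → EuclideanSpace ℝ (Fin d), (∀ i, v i ∈ latticeNu d ν) ∧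
        LinearIndependent ℝ v ∧ (∀ i : Fin k, (i : ℕ) = 0 → v i = v1) ∧
        (∀ i : Fin k, (i : ℕ) ≠ 0 → ‖v i‖ ≤ 2 * σ + ε) by
    exact H d le_rfl hd
  intro k
  induction k with
  | zero => intro _ h; omega
  | succ k ih =>
    intro hkd hk1
    by_cases hk0 : k = 0
    · subst hk0
      refine ⟨fun _ => v1, fun _ => hv1L, ?_, fun _ _ => rfl, ?_⟩
      · exact (linearIndependent_unique_iff (ι := Fin 1) (v := fun _ : Fin 1 => v1)).2 hv1
      · intro i hi
        exact absurd (Fin.val_eq_zero i) hi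
    · obtain ⟨v, hvL, hli, h0, hbig⟩ := ih (Nat.le_of_succ_le hkd) (Nat.one_le_iff_ne_zero.2 hk0)
      set V : Submodule ℝ (EuclideanSpace ℝ (Fin d)) := Submodule.span ℝ (Set.range v) with hVdef
      have hVne : V ≠ ⊤ := by
        intro hV
        have h1 : finrank ℝ V ≤ k := by
          have := finrank_range_le_card (R := ℝ) v
          simpa [Set.finrank, hVdef] using this
        rw [hV] at h1
        rw [finrank_top, finrank_euclideanSpace_fin] at h1
        omega
      have hVbot : Vᗮ ≠ ⊥ := by rwa [Ne, Submodule.orthogonal_eq_bot_iff]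
      obtain ⟨w, hwV, hw0⟩ := Submodule.exists_mem_ne_zero_of_ne_bot hVbot
      have hwn : (0:ℝ) < ‖w‖ := norm_pos_iff.2 hw0
      set x : EuclideanSpace ℝ (Fin d) := ((σ + ε/2) / ‖w‖) • w with hxdef
      have hxV : x ∈ Vᗮ := Vᗮ.smul_mem _ hwV
      have hxnorm : ‖x‖ = σ + ε/2 := by
        rw [hxdef, norm_smul, Real.norm_eq_abs, abs_div, abs_of_pos (by linarith),
          abs_of_pos hwn, div_mul_cancel₀]
        exact ne_of_gt hwn
      obtain ⟨y, hyL, hyd⟩ := hcov x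
      have hyV : y ∉ V := by
        intro hyV
        have hinner : inner (𝕜 := ℝ) y x = 0 := hxV y hyV
        have h1 : ‖x‖^2 = inner (𝕜 := ℝ) x (x - y) := by
          rw [inner_sub_right, real_inner_self_eq_norm_sq, real_inner_comm, hinner, sub_zero]
        have h2 : inner (𝕜 := ℝ) x (x - y) ≤ ‖x‖ * ‖x - y‖ :=
          (real_inner_le_norm x (x - y))
        have h3 : ‖x - y‖ ≤ σ := by rwa [← dist_eq_norm]
        have hx0 : (0:ℝ) < ‖x‖ := by rw [hxnorm]; linarith
        nlinarith [hxnorm]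
      have hynorm : ‖y‖ ≤ 2 * σ + ε := by
        have h3 : ‖x - y‖ ≤ σ := by rwa [← dist_eq_norm]
        calc ‖y‖ = ‖x - (x - y)‖ := by congr 1; abel
          _ ≤ ‖x‖ + ‖x - y‖ := norm_sub_le _ _
          _ ≤ (σ + ε/2) + σ := by rw [hxnorm]; linarith
          _ ≤ 2 * σ + ε := by linarith
      refine ⟨Fin.snoc v y, ?_, ?_, ?_, ?_⟩
      · intro i
        refine Fin.lastCases ?_ ?_ i
        · rw [Fin.snoc_last]; exact hyL
        · intro j; rw [Fin.snoc_castSucc]; exact hvL j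
      · rw [linearIndependent_fin_snoc]
        exact ⟨hli, fun h => hyV h⟩
      · intro i
        refine Fin.lastCases ?_ ?_ i
        · intro h; exfalso; rw [Fin.val_last] at h; omega
        · intro j hj
          rw [Fin.snoc_castSucc]
          exact h0 j (by rwa [Fin.coe_castSucc] at hj)
      · intro i
        refine Fin.lastCases ?_ ?_ i
        · intro _; rw [Fin.snoc_last]; exact hynorm
        · intro j hj
          rw [Fin.snoc_castSucc]
          exact hbig j (by rwa [Fin.coe_castSucc] at hj)

open Filter Topology in
/-- `λ₁(L_ν) ≥ 1 / (2^{d-1} q τ(L_ν)^{d-1})`. -/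
theorem firstMin_latticeNu_lower (d : ℕ) (hd : 1 ≤ d) (p : Fin d → ℕ) (q : ℕ)
    (hp : ∀ i, 0 < p i) (hq : ∀ i, p i < q)
    (hgcd : Nat.gcd (Finset.univ.gcd p) q = 1)
    (ν : EuclideanSpace ℝ (Fin d)) (hν : ∀ i, ν i = (p i : ℝ) / (q : ℝ)) :
    firstMin d (latticeNu d ν)
      ≥ 1 / (2 ^ (d - 1) * (q : ℝ) * covRad d (latticeNu d ν) ^ (d - 1)) := by
  classical
  have hd0 : 0 < d := hd
  have hqn : 0 < q := lt_trans (hp ⟨0, hd0⟩) (hq ⟨0, hd0⟩)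
  have hq0R : (0:ℝ) < q := by exact_mod_cast hqn
  set S : Set ℝ := {σ : ℝ | 0 < σ ∧
      ∀ x : EuclideanSpace ℝ (Fin d), ∃ y ∈ latticeNu d ν, dist x y ≤ σ} with hSdef
  have hSne : S.Nonempty := ⟨_, sqrt_mem_covSet d hd0 ν⟩
  have hτdef : covRad d (latticeNu d ν) = sInf S := rfl
  set τ : ℝ := covRad d (latticeNu d ν) with hτ
  have hτ0 : 0 ≤ τ := by
    rw [hτdef]
    exact Real.sInf_nonneg (fun x hx => le_of_lt hx.1)
  have key : ∀ x ∈ latticeNu d ν, x ≠ 0 →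
      1 / (2 ^ (d - 1) * (q : ℝ) * τ ^ (d - 1)) ≤ ‖x‖ := by
    intro x hxL hx0
    have claim : ∀ ε : ℝ, 0 < ε → 1/(q:ℝ) ≤ ‖x‖ * (2*τ + 3*ε)^(d-1) := by
      intro ε hε
      obtain ⟨σ, hσS, hσlt⟩ := Real.lt_sInf_add_pos hSne hε
      rw [← hτdef] at hσlt
      obtain ⟨v, hvL, hli, h0, hbig⟩ :=
        exists_good_family d hd0 ν x hxL hx0 σ ε hε hσS.1 hσS.2
      obtain ⟨n, hn⟩ := exists_int_det d q hqn p ν hν v hvL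
      have hdne := det_ne_zero_of_li d hd0 v hli
      have hnne : n ≠ 0 := by
        intro h
        rw [h, Int.cast_zero] at hn
        rcases mul_eq_zero.mp hn with h1 | h1
        · exact absurd h1 (ne_of_gt hq0R)
        · exact hdne h1
      have h1q : 1/(q:ℝ) ≤ |Matrix.det (Matrix.of fun i j => v i j)| := by
        have habs : (q:ℝ) * |Matrix.det (Matrix.of fun i j => v i j)| = |(n:ℝ)| := by
          rw [← abs_of_pos hq0R, ← abs_mul, hn]
        have h1 : (1:ℝ) ≤ |(n:ℝ)| := by
          have := Int.one_le_abs hnne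
          exact_mod_cast this
        rw [div_le_iff₀ hq0R, mul_comm]
        linarith
      have hHad := abs_det_le_prod_norm d hd0 v
      have hprod : ∏ i, ‖v i‖ ≤ ‖x‖ * (2*τ + 3*ε)^(d-1) := by
        set i0 : Fin d := ⟨0, hd0⟩ with hi0
        have hsplit : ‖v i0‖ * ∏ i ∈ Finset.univ.erase i0, ‖v i‖ = ∏ i, ‖v i‖ :=
          Finset.mul_prod_erase Finset.univ (fun i => ‖v i‖) (Finset.mem_univ i0)
        have hv0 : v i0 = x := h0 i0 rfl
        have hbound : 2*σ + ε ≤ 2*τ + 3*ε := by linarith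
        have hrest : ∏ i ∈ Finset.univ.erase i0, ‖v i‖ ≤ (2*τ + 3*ε)^(d-1) := by
          calc ∏ i ∈ Finset.univ.erase i0, ‖v i‖
              ≤ ∏ _i ∈ Finset.univ.erase i0, (2*τ + 3*ε) := by
                apply Finset.prod_le_prod
                · intro i _; exact norm_nonneg _
                · intro i hi
                  have hine : (i:ℕ) ≠ 0 := by
                    intro hiv
                    exact (Finset.mem_erase.mp hi).1 (Fin.ext hiv)
                  exact le_trans (hbig i hine) hbound
            _ = (2*τ + 3*ε)^((Finset.univ.erase i0).card) := Finset.prod_const _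
            _ = (2*τ + 3*ε)^(d-1) := by
                rw [Finset.card_erase_of_mem (Finset.mem_univ i0), Finset.card_univ,
                  Fintype.card_fin]
        calc ∏ i, ‖v i‖ = ‖x‖ * ∏ i ∈ Finset.univ.erase i0, ‖v i‖ := by
              rw [← hsplit, hv0]
          _ ≤ ‖x‖ * (2*τ + 3*ε)^(d-1) :=
              mul_le_mul_of_nonneg_left hrest (norm_nonneg _)
      linarith
    have lim : 1/(q:ℝ) ≤ ‖x‖ * (2*τ)^(d-1) := by
      have hcont : Continuous (fun e : ℝ => ‖x‖ * (2*τ + 3*e)^(d-1)) := by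
        apply continuous_const.mul
        exact (continuous_const.add (continuous_const.mul continuous_id)).pow _
      have hlim : Tendsto (fun e : ℝ => ‖x‖ * (2*τ + 3*e)^(d-1)) (𝓝[>] (0:ℝ))
          (𝓝 (‖x‖ * (2*τ)^(d-1))) := by
        have h5 : Filter.Tendsto (fun e : ℝ => ‖x‖ * (2*τ + 3*e)^(d-1)) (𝓝[>] (0:ℝ))
            (𝓝 (‖x‖ * (2*τ + 3*(0:ℝ))^(d-1))) :=
          (hcont.tendsto 0).mono_left nhdsWithin_le_nhds
        simpa using h5
      exact ge_of_tendsto hlim (eventually_nhdsWithin_of_forall (fun e he => claim e he))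
    have hDpos : 0 < 2 ^ (d - 1) * (q : ℝ) * τ ^ (d - 1) := by
      rcases eq_or_lt_of_le hτ0 with h0τ | hτpos
      · have hd1 : d = 1 := by
          by_contra hd1
          have hdm : d - 1 ≠ 0 := by omega
          have hz : (2*τ)^(d-1) = (0:ℝ) := by
            rw [← h0τ, mul_zero, zero_pow hdm]
          rw [hz, mul_zero] at lim
          have : (0:ℝ) < 1/q := by positivity
          linarith
        rw [hd1]
        norm_num
        exact_mod_cast hq0R
      · positivity
    rw [div_le_iff₀ hDpos]
    have h2 := (div_le_iff₀ hq0R).mp lim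
    have h3 : (2*τ)^(d-1) = 2^(d-1) * τ^(d-1) := mul_pow 2 τ (d-1)
    have h4 : ‖x‖ * (2 ^ (d-1) * (q:ℝ) * τ ^ (d-1)) = ‖x‖ * (2*τ)^(d-1) * q := by
      rw [h3]; ring
    rw [h4]
    exact h2
  rw [ge_iff_le]
  apply le_csInf (firstMin_set_nonempty d hd0 ν)
  rintro r ⟨x, hxL, hx0, rfl⟩
  exact key x hxL hx0
end
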